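/- Let α ∈ [1/2, 1) and m₁ ≥ 0 an integer. Define h(α) = (m₁² + 2m₁ − 1)α⁴ + (−6m₁ − 4)α³ + (3m₁ + 14)α² − 12α + 3. If m₁ ≥ 3 then h is increasing on [1/2,1) and h(1/2) = (m₁² + 2m₁ − 1)/16 > 0, hence h(α) > 0 for all α ∈ [1/2,1). -/

import Mathlib

/-- The auxiliary polynomial `h` from Lemma 3 of the paper. -/
noncomputable def hpoly (m₁ : ℕ) (α : ℝ) : ℝ :=
  ((m₁ : ℝ) ^ 2 + 2 * m₁ - 1) * α ^ 4 + (-6 * (m₁ : ℝ) - 4) * α ^ 3 +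
    (3 * (m₁ : ℝ) + 14) * α ^ 2 - 12 * α + 3

lemma hpoly_deriv (m₁ : ℕ) (x : ℝ) :
    HasDerivAt (hpoly m₁)
      (4 * ((m₁ : ℝ) ^ 2 + 2 * m₁ - 1) * x ^ 3 + 3 * (-6 * (m₁ : ℝ) - 4) * x ^ 2 +
        2 * (3 * (m₁ : ℝ) + 14) * x - 12) x := by
  unfold hpoly
  have h := (((((hasDerivAt_pow 4 x).const_mul ((m₁ : ℝ) ^ 2 + 2 * m₁ - 1)).add
    ((hasDerivAt_pow 3 x).const_mul (-6 * (m₁ : ℝ) - 4))).add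
    ((hasDerivAt_pow 2 x).const_mul (3 * (m₁ : ℝ) + 14))).sub
    ((hasDerivAt_id x).const_mul 12)).add_const 3
  refine h.congr_deriv ?_
  push_cast
  ring

theorem stmt13 (m₁ : ℕ) (hm : 3 ≤ m₁) :
    StrictMonoOn (hpoly m₁) (Set.Ico (1 / 2 : ℝ) 1) ∧
    hpoly m₁ (1 / 2) = ((m₁ : ℝ) ^ 2 + 2 * m₁ - 1) / 16 ∧
    0 < ((m₁ : ℝ) ^ 2 + 2 * m₁ - 1) / 16 ∧
    ∀ α ∈ Set.Ico (1 / 2 : ℝ) 1, 0 < hpoly m₁ α := by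
  have hm' : (3 : ℝ) ≤ (m₁ : ℝ) := by exact_mod_cast hm
  have hmono : StrictMonoOn (hpoly m₁) (Set.Ico (1 / 2 : ℝ) 1) := by
    apply StrictMonoOn.mono (s := Set.Icc (1 / 2 : ℝ) 1) _ Set.Ico_subset_Icc_self
    apply strictMonoOn_of_hasDerivWithinAt_pos (convex_Icc _ _)
      (fun x _ => (hpoly_deriv m₁ x).continuousAt.continuousWithinAt)
      (fun x _ => (hpoly_deriv m₁ x).hasDerivWithinAt)
    intro x hx
    rw [interior_Icc] at hx
    obtain ⟨h1, h2⟩ := hx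
    have hx0 : (0:ℝ) < x := by linarith
    have ht : (0:ℝ) ≤ (m₁:ℝ) - 3 := by linarith
    have hq : (0:ℝ) ≤ 32*x^3 - 18*x^2 + 6*x := by nlinarith [sq_nonneg (16*x - 9/2), sq_nonneg x]
    have h1' : (0:ℝ) ≤ ((m₁:ℝ) - 3) * (32*x^3 - 18*x^2 + 6*x) := mul_nonneg ht hq
    have h2' : (0:ℝ) ≤ ((m₁:ℝ) - 3)^2 * x^3 :=
      mul_nonneg (sq_nonneg _) (by positivity)
    have h3' : (0:ℝ) < 56*x^3 - 66*x^2 + 46*x - 12 := by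
      nlinarith [mul_pos (sub_pos.2 h1)
        (show (0:ℝ) < 56*x^2 - 38*x + 27 by nlinarith [sq_nonneg (28*x - 19/2)])]
    nlinarith [h1', h2', h3']
  have hval : hpoly m₁ (1 / 2) = ((m₁ : ℝ) ^ 2 + 2 * m₁ - 1) / 16 := by
    unfold hpoly; ring
  have hpos : 0 < ((m₁ : ℝ) ^ 2 + 2 * m₁ - 1) / 16 := by nlinarith
  refine ⟨hmono, hval, hpos, fun α hα => ?_⟩
  rcases eq_or_lt_of_le hα.1 with h | h
  · rw [← h, hval]; exact hpos
  · have := hmono ⟨le_refl _, by norm_num⟩ hα h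
    rw [hval] at this
    linarith
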